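/- arXiv:2407.14384 — 2 statements merged into one kernel-verified Lean document; each statement's English description precedes it below -/
import Mathlib

section
/- Let I be an instance, R a sticky ruleset, and t a term of chase(I,R) with birth atom α. If some term t' occurs at a marked position in α, then every atom β of chase(I,R) containing t also contains t' at a marked position. -/
set_option maxHeartbeats 1000000

noncomputable section

open Classical

/-! ### Basic syntax: predicates, atoms, rules, databases, instances -/

/-- An abstract atom: a predicate identifier together with a list of
argument identifiers (variables in rules/queries, constants in databases). -/
abbrev PAtom : Type := ℕ × List ℕ

/-- An existential rule `∀x∀y (α(x,y) → ∃z β(y,z))`, given by a body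
(a finite conjunction/list of atoms over variables) and a single head atom.
Head variables not occurring in the body are (implicitly) existentially
quantified. -/
abbrev ERule : Type := List PAtom × PAtom

/-- A ruleset is a finite set (list) of existential rules. -/
abbrev Ruleset : Type := List ERule

/-- A database is a finite set (list) of facts, i.e. atoms over constants. -/
abbrev Database : Type := List PAtom

/-- Terms: constants, (labelled) nulls, and functional (Skolem) terms. -/
inductive GTerm : Type where
  | const : ℕ → GTerm
  | null : ℕ → GTerm
  | func : ℕ → List GTerm → GTerm

instance : DecidableEq GTerm := Classical.decEq _

/-- A (ground) atom of an instance: a predicate with a list of terms. -/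
structure GAtom : Type where
  pred : ℕ
  args : List GTerm

/-- An instance is a (possibly infinite) set of atoms (it is automatically
countable, as `GAtom` is a countable type). -/
abbrev Inst : Type := Set GAtom

/-- Applying a variable assignment to an abstract atom. -/
def substAtom (h : ℕ → GTerm) (a : PAtom) : GAtom := ⟨a.1, a.2.map h⟩

/-- The list of all variable occurrences in the body of a rule. -/
def bodyVarList (ρ : ERule) : List ℕ := ρ.1.foldr (fun a r => a.2 ++ r) []

/-- The variables of the head of a rule. -/
def headVars (ρ : ERule) : List ℕ := ρ.2.2

/-- A join variable: a variable occurring more than once in the body. -/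
def isJoinVar (ρ : ERule) (v : ℕ) : Prop := 1 < (bodyVarList ρ).count v

/-- The frontier of a rule: variables shared between body and head. -/
def frontierVars (ρ : ERule) : Set ℕ := {v | v ∈ bodyVarList ρ ∧ v ∈ headVars ρ}

/-- Existential variables of a rule: head variables not occurring in the body. -/
def existVars (ρ : ERule) : Set ℕ := {v | v ∈ headVars ρ ∧ v ∉ bodyVarList ρ}

/-- Satisfaction of an existential rule by an instance: every homomorphic
match of the body extends to a match of the head. -/
def satRule (I : Inst) (ρ : ERule) : Prop :=
  ∀ h : ℕ → GTerm, (∀ a ∈ ρ.1, substAtom h a ∈ I) →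
    ∃ g : ℕ → GTerm, (∀ v ∈ bodyVarList ρ, g v = h v) ∧ substAtom g ρ.2 ∈ I

/-- The instance corresponding to a database (constants interpreted as constants). -/
def dbInst (D : Database) : Inst := {α | ∃ a ∈ D, α = substAtom GTerm.const a}

/-- `I` is a model of the database `D` and the ruleset `R`. -/
def isModelOf (I : Inst) (D : Database) (R : Ruleset) : Prop :=
  dbInst D ⊆ I ∧ ∀ ρ ∈ R, satRule I ρ

/-- The active domain of an instance. -/
def adom (I : Inst) : Set GTerm := {t | ∃ α ∈ I, t ∈ α.args}

/-! ### Paths and regular path queries -/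

/-- A directed path from `s` to `t` in the instance `I` whose successive
binary-predicate edge labels spell the word `w`. -/
inductive IPath (I : Inst) : GTerm → List ℕ → GTerm → Prop where
  | nil (t : GTerm) : IPath I t [] t
  | cons {s t u : GTerm} {p : ℕ} {w : List ℕ} :
      (⟨p, [s, t]⟩ : GAtom) ∈ I → IPath I t w u → IPath I s (p :: w) u

/-- Satisfaction of the Boolean path query `∃x,y. L(x,y)` (with `x ≠ y`,
`L` a word language over binary predicates) by an instance. -/
def satLang (I : Inst) (L : Set (List ℕ)) : Prop :=
  ∃ s t w, s ∈ adom I ∧ t ∈ adom I ∧ IPath I s w t ∧ w ∈ L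

/-- Satisfaction of the Boolean RPQ `∃x,y. A(x,y)` given by a regular
expression `A` over binary predicates. -/
def satRPQ (I : Inst) (A : RegularExpression ℕ) : Prop := satLang I A.matches'

/-- Certain-answer entailment of a Boolean RPQ: every model of `D` and `R`
satisfies the query. -/
def entailsRPQ (D : Database) (R : Ruleset) (A : RegularExpression ℕ) : Prop :=
  ∀ I : Inst, isModelOf I D R → satRPQ I A

/-! ### The Skolem chase (with Skolem symbols determined by the isomorphism
type of the instantiated rule head) -/

/-- The result of applying a trigger `(ρ, h)`: the instantiated head atom,
where each existential variable is replaced by a Skolem term whose function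
symbol encodes the isomorphism type of the instantiated head query, applied
to the (distinct) frontier terms. -/
def skolemAtom (ρ : ERule) (h : ℕ → GTerm) : GAtom :=
  let bv := bodyVarList ρ
  let hargs : List (GTerm ⊕ ℕ) :=
    ρ.2.2.map (fun v => if v ∈ bv then Sum.inl (h v) else Sum.inr v)
  let fts : List GTerm := (hargs.filterMap Sum.getLeft?).dedup
  let evs : List ℕ := (hargs.filterMap Sum.getRight?).dedup
  let pat : ℕ × List (ℕ ⊕ ℕ) :=
    (ρ.2.1, hargs.map (fun x =>
      match x with
      | Sum.inl t => Sum.inl (fts.findIdx (fun u => decide (u = t)))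
      | Sum.inr v => Sum.inr (evs.findIdx (fun u => decide (u = v)))))
  ⟨ρ.2.1, ρ.2.2.map (fun v =>
    if v ∈ bv then h v
    else GTerm.func (Encodable.encode (pat, evs.findIdx (fun u => decide (u = v)))) fts)⟩

/-- One (parallel) chase step: apply all triggers of `R` in `I`. -/
def chaseStep (R : Set ERule) (I : Inst) : Inst :=
  I ∪ {α | ∃ ρ ∈ R, ∃ h : ℕ → GTerm, (∀ a ∈ ρ.1, substAtom h a ∈ I) ∧ α = skolemAtom ρ h}

/-- The finite stages of the Skolem chase. -/
def chaseStage (R : Set ERule) (I : Inst) : ℕ → Inst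
  | 0 => I
  | n + 1 => chaseStep R (chaseStage R I n)

/-- The Skolem chase of an instance `I` with a (possibly infinite) set of rules `R`. -/
def chase (I : Inst) (R : Set ERule) : Inst := ⋃ n, chaseStage R I n

/-- The set of rules of a (finite, syntactic) ruleset. -/
def rsSet (R : Ruleset) : Set ERule := {ρ | ρ ∈ R}

/-! ### Conjunctive queries, UCQs and finite unification sets -/

/-- Satisfaction of a CQ (list of atoms; `free` lists its free variables,
all other variables are existential) under the answer tuple `a`. -/
def satCQ (I : Inst) (atoms : List PAtom) (free : List ℕ) (a : List GTerm) : Prop :=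
  ∃ h : ℕ → GTerm, List.Forall₂ (fun v t => h v = t) free a ∧ ∀ β ∈ atoms, substAtom h β ∈ I

/-- A UCQ: a disjunction (list) of CQs sharing a tuple of free variables. -/
abbrev UCQ : Type := List (List PAtom) × List ℕ

/-- Satisfaction of a UCQ under the answer tuple `a`. -/
def satUCQ (I : Inst) (Q : UCQ) (a : List GTerm) : Prop := ∃ d ∈ Q.1, satCQ I d Q.2 a

/-- `R` is a finite unification set (fus): every UCQ has a UCQ rewriting. -/
def isFUS (R : Ruleset) : Prop :=
  ∀ Q : UCQ, ∃ Q' : UCQ, Q'.2 = Q.2 ∧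
    ∀ (D : Database) (a : List ℕ),
      (satUCQ (chase (dbInst D) (rsSet R)) Q (a.map GTerm.const) ↔
        satUCQ (dbInst D) Q' (a.map GTerm.const))

/-! ### Sticky and stellar rulesets -/

/-- Variable `v` appears at a position of the head of `ρ` marked by `m`. -/
def markedInHead (m : ℕ → Set ℕ) (ρ : ERule) (v : ℕ) : Prop :=
  ∃ i ∈ m ρ.2.1, ρ.2.2[i]? = some v

/-- `m` is a sticky marking for the set of rules `R`: every join variable of a
rule appears at a marked position of its head atom, and every body variable at
a marked position appears at a marked position of the head atom. -/
def stickyMarking (m : ℕ → Set ℕ) (R : Set ERule) : Prop :=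
  ∀ ρ ∈ R,
    (∀ v, isJoinVar ρ v → markedInHead m ρ v) ∧
    (∀ v, ∀ a ∈ ρ.1, (∃ i ∈ m a.1, a.2[i]? = some v) → markedInHead m ρ v)

/-- A (possibly infinite) set of rules is sticky iff it admits a sticky marking. -/
def isStickySet (R : Set ERule) : Prop := ∃ m, stickyMarking m R

/-- A ruleset is sticky iff it admits a sticky marking. -/
def isSticky (R : Ruleset) : Prop := isStickySet (rsSet R)

/-- A stellar rule: at most one join variable, which must be a frontier
(head) variable. -/
def isStellarRule (ρ : ERule) : Prop :=
  (∀ v w, isJoinVar ρ v → isJoinVar ρ w → v = w) ∧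
  ∀ v, isJoinVar ρ v → v ∈ headVars ρ

/-! ### Merging two terms of an instance -/

/-- The map replacing the terms `s` and `t` by `u`. -/
def mergeMap (s t u : GTerm) : GTerm → GTerm := fun v => if v = s ∨ v = t then u else v

/-- `I[s,t ↦ u]`: the instance obtained from `I` by replacing every
occurrence of `s` or `t` by `u`. -/
def mergeInst (I : Inst) (s t u : GTerm) : Inst :=
  (fun α => GAtom.mk α.pred (α.args.map (mergeMap s t u))) '' I

/-! ### Stellar queries and stellar types -/

/-- A stellar query with free variable `y`: `y` is the only join variable and
each atom contains at most one occurrence of `y`. -/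
def isSQ (atoms : List PAtom) (y : ℕ) : Prop :=
  (∀ v, v ≠ y → (atoms.foldr (fun a r => a.2 ++ r) []).count v ≤ 1) ∧
  ∀ a ∈ atoms, a.2.count y ≤ 1

/-- Satisfaction of a stellar query at the term `s`. -/
def satSQ (I : Inst) (atoms : List PAtom) (y : ℕ) (s : GTerm) : Prop :=
  ∃ h : ℕ → GTerm, h y = s ∧ ∀ a ∈ atoms, substAtom h a ∈ I

/-- Two terms have the same stellar type `★(s) = ★(t)` iff they satisfy
exactly the same stellar queries (equivalently, their most specific stellar
queries are equivalent). -/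
def sameStellarType (I : Inst) (s t : GTerm) : Prop :=
  ∀ (atoms : List PAtom) (y : ℕ), isSQ atoms y → (satSQ I atoms y s ↔ satSQ I atoms y t)

/-! ### Regular types -/

/-- The regular type `↑_A(t)` of a term w.r.t. a DFA: all pairs `(q, q')` such
that `t` has an outgoing path labelled by some word `w` with `δ*(q, w) = q'`. -/
def regType {σ : Type} (I : Inst) (dfa : DFA ℕ σ) (t : GTerm) : Set (σ × σ) :=
  {p | ∃ w u, IPath I t w u ∧ dfa.evalFrom p.1 w = p.2}

/-! ### Homomorphisms between instances -/

/-- A homomorphism from `I` to `J`: a constant-preserving map on terms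
sending every atom of `I` to an atom of `J`. -/
def isHom (h : GTerm → GTerm) (I J : Inst) : Prop :=
  (∀ c, h (GTerm.const c) = GTerm.const c) ∧
  ∀ α ∈ I, (⟨α.pred, α.args.map h⟩ : GAtom) ∈ J

/-! ### Backward rewriting (à la König et al.) -/

/-- Applying a variable renaming to an abstract atom. -/
def substP (σ : ℕ → ℕ) (a : PAtom) : PAtom := (a.1, a.2.map σ)

/-- The variables of a CQ. -/
def cqVars (Q : List PAtom) : Set ℕ := {v | ∃ a ∈ Q, v ∈ a.2}

/-- The rule `ρ` is backward applicable to the CQ `Q` (with free variables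
`Y`) with respect to the variable identification `σ` and the isomorphism `f`
from the head of `ρ` to an atom of `Q|σ`. -/
def backApp (ρ : ERule) (Y : Set ℕ) (Q : List PAtom) (σ f : ℕ → ℕ) : Prop :=
  (∀ y ∈ Y, σ y = y) ∧
  (∀ v, ∀ y ∈ Y, σ v = y → v = y) ∧
  substP f ρ.2 ∈ Q.map (substP σ) ∧
  (∀ v w, v ∈ headVars ρ → w ∈ headVars ρ → f v = f w → v = w) ∧
  (∀ z ∈ existVars ρ, f z ∉ Y) ∧
  (∀ a ∈ Q.map (substP σ), (∃ z ∈ existVars ρ, f z ∈ a.2) → a = substP f ρ.2)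

/-- One backward rewriting step on CQs with free variables `Y`, using a rule
of `R` with a minimal variable identification: the matched atom is replaced
by the rule body (with fresh non-frontier variables). -/
def backStep (R : Set ERule) (Y : Set ℕ) (Q Q' : List PAtom) : Prop :=
  ∃ ρ ∈ R, ∃ σ f g : ℕ → ℕ,
    backApp ρ Y Q σ f ∧
    (∀ σ' : ℕ → ℕ, (∀ v w, σ' v = σ' w → σ v = σ w) →
      (∃ v w, v ∈ cqVars Q ∧ w ∈ cqVars Q ∧ σ v = σ w ∧ σ' v ≠ σ' w) →
      ¬ backApp ρ Y Q σ' f) ∧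
    (∀ v ∈ frontierVars ρ, g v = f v) ∧
    (∀ v w, v ∈ bodyVarList ρ → v ∉ headVars ρ → w ∈ bodyVarList ρ → w ∉ headVars ρ →
      g v = g w → v = w) ∧
    (∀ v, v ∈ bodyVarList ρ → v ∉ headVars ρ →
      g v ∉ cqVars (Q.map (substP σ)) ∧ g v ∉ Y) ∧
    Q' = (Q.map (substP σ)).filter (fun a => decide (a ≠ substP f ρ.2)) ++ ρ.1.map (substP g)

/-- `rew(R)`: `R` together with all rules obtained from rules of `R` by
rewriting their bodies (with the frontier treated as free variables). -/
def rewSet (R : Set ERule) : Set ERule :=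
  R ∪ {ρ' | ∃ ρ ∈ R, ∃ q, Relation.ReflTransGen (backStep R (frontierVars ρ)) ρ.1 q ∧ ρ' = (q, ρ.2)}

/-! ### Frontier terms of chase atoms and quick rulesets -/

/-- `t` is a frontier term of the chase atom `β`: a term of `β` introduced
during the chase strictly earlier than `β`. -/
def isFrontierTermOf (I : Inst) (R : Set ERule) (β : GAtom) (t : GTerm) : Prop :=
  t ∈ β.args ∧ ∃ i, t ∈ adom (chaseStage R I i) ∧ β ∉ chaseStage R I i

/-- A set of rules is quick: every chase atom whose frontier terms all occur
in the initial instance is already produced by the first chase step. -/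
def isQuick (R : Set ERule) : Prop :=
  ∀ (I : Inst) (β : GAtom), β ∈ chase I R →
    (∀ t, isFrontierTermOf I R β t → t ∈ adom I) → β ∈ chaseStage R I 1

/-! ### Cores of rule bodies and the rulesets cr⁺(R), R⁺ -/

/-- A homomorphism between CQs fixing the variables in `Y` pointwise. -/
def cqHomTo (Y : Set ℕ) (q q' : List PAtom) : Prop :=
  ∃ h : ℕ → ℕ, (∀ y ∈ Y, h y = y) ∧ ∀ a ∈ q, substP h a ∈ q'

/-- `q'` is a core of `q` with the variables of `Y` treated as constants:
a minimal sub-conjunction of `q` into which `q` homomorphically maps. -/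
def isCoreOf (Y : Set ℕ) (q' q : List PAtom) : Prop :=
  (∀ a ∈ q', a ∈ q) ∧ cqHomTo Y q q' ∧
  ∀ q'' : List PAtom, (∀ a ∈ q'', a ∈ q') → cqHomTo Y q q'' → ∀ a ∈ q', a ∈ q''

/-- `ρ'` is (a) `core(ρ)`: same head, body a core of the body of `ρ` with the
frontier variables treated as constants. -/
def isCoreRuleOf (ρ' ρ : ERule) : Prop := ρ'.2 = ρ.2 ∧ isCoreOf (frontierVars ρ) ρ'.1 ρ.1

/-- The rule obtained by substituting all join variables of `ρ` by one and
the same fresh variable. -/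
def collapseJoins (ρ : ERule) : ERule :=
  let fv := ((bodyVarList ρ ++ headVars ρ).foldr max 0) + 1
  let c : ℕ → ℕ := fun v => if 1 < (bodyVarList ρ).count v then fv else v
  (ρ.1.map (substP c), substP c ρ.2)

/-- `cr⁺(R)`: the cores of the rules of `rew(R)` (via the core-choosing
function `C`), augmented, for every non-stellar such rule, with its variant
where all join variables are identified with a single fresh variable. -/
def crPlus (C : ERule → ERule) (R : Set ERule) : Set ERule :=
  (C '' rewSet R) ∪
  {ρ' | ∃ ρ ∈ rewSet R, ¬ isStellarRule (C ρ) ∧ ρ' = collapseJoins (C ρ)}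

/-- `R⁺`: `cr⁺(R)` with all rules having two or more join variables removed. -/
def rPlusOf (C : ERule → ERule) (R : Set ERule) : Set ERule :=
  {ρ ∈ crPlus C R | ¬ ∃ v w, isJoinVar ρ v ∧ isJoinVar ρ w ∧ v ≠ w}

/-! ### Two-counter automata, the grid database/ruleset, and the query DFA -/

/-- A (deterministic, Minsky-style) two-counter automaton. Each state `q`
carries the instruction
`if C == 0 then C += 1; goto qt q else C += d; goto qf q`,
where `C` is counter `x` if `cX q` and counter `y` otherwise, and `d = +1`
if `dPlus q` and `d = -1` otherwise. -/
structure TCA where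
  numStates : ℕ
  cX : Fin (numStates + 1) → Bool
  dPlus : Fin (numStates + 1) → Bool
  qt : Fin (numStates + 1) → Fin (numStates + 1)
  qf : Fin (numStates + 1) → Fin (numStates + 1)
  q0 : Fin (numStates + 1)
  qhalt : Fin (numStates + 1)

abbrev TCA.State (M : TCA) : Type := Fin (M.numStates + 1)

/-- One step of a two-counter automaton on a configuration `(q, x, y)`. -/
def TCA.step (M : TCA) : M.State × ℕ × ℕ → M.State × ℕ × ℕ := fun c =>
  let q := c.1
  let x := c.2.1
  let y := c.2.2
  if M.cX q then
    if x = 0 then (M.qt q, 1, y)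
    else (M.qf q, (if M.dPlus q then x + 1 else x - 1), y)
  else
    if y = 0 then (M.qt q, x, 1)
    else (M.qf q, x, (if M.dPlus q then y + 1 else y - 1))

/-- `M` halts when started in state `q0` with both counters zero. -/
def TCA.Halts (M : TCA) : Prop := ∃ k, ((M.step)^[k] (M.q0, 0, 0)).1 = M.qhalt

/-- The fixed predicate identifiers. -/
def pIncX : ℕ := 0
def pIncY : ℕ := 1
def pDecX : ℕ := 2
def pDecY : ℕ := 3
def pXZero : ℕ := 4
def pYZero : ℕ := 5
def pSucc : ℕ := 6
def pZero : ℕ := 7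
def pGridPoint : ℕ := 8
def pXCoord : ℕ := 9
def pYCoord : ℕ := 10

/-- `Σ(C += 1)` for the counter selected by `b` (`true` = counter x). -/
def sIncr (b : Bool) : ℕ := if b then pIncX else pIncY
/-- `Σ(C -= 1)`. -/
def sDecr (b : Bool) : ℕ := if b then pDecX else pDecY
/-- `Σ(C == 0)`. -/
def sZero (b : Bool) : ℕ := if b then pXZero else pYZero

/-- The states of the DFA `A_M`: the states of `M` plus four auxiliary states
(then₁, then₂, else₁, else₂) per state of `M`, plus a sink (`none`). -/
abbrev AState (M : TCA) : Type := Option (M.State ⊕ M.State × Fin 4)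

/-- The transition function of the DFA `A_M`: the instruction of each state
`q` of `M` is compiled into the 'then' branch reading
`Σ(C==0), Σ(C==0), Σ(C+=1)` (ending in `qt q`) and the 'else' branch reading
`Σ(C-=1), Σ(C+=1), Σ(C+=d)` (ending in `qf q`). -/
def TCA.delta (M : TCA) : AState M → ℕ → AState M
  | none, _ => none
  | some (Sum.inl q), a =>
    if a = sZero (M.cX q) then some (Sum.inr (q, (0 : Fin 4)))
    else if a = sDecr (M.cX q) then some (Sum.inr (q, (2 : Fin 4)))
    else none
  | some (Sum.inr (q, i)), a =>
    if i = (0 : Fin 4) then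
      (if a = sZero (M.cX q) then some (Sum.inr (q, (1 : Fin 4))) else none)
    else if i = (1 : Fin 4) then
      (if a = sIncr (M.cX q) then some (Sum.inl (M.qt q)) else none)
    else if i = (2 : Fin 4) then
      (if a = sIncr (M.cX q) then some (Sum.inr (q, (3 : Fin 4))) else none)
    else
      (if a = (if M.dPlus q then sIncr (M.cX q) else sDecr (M.cX q))
        then some (Sum.inl (M.qf q)) else none)

/-- The DFA `A_M` simulating the TCA `M`; its starting (accepting) state is
the starting (halting) state of `M`. -/
def tcaDFA (M : TCA) : DFA ℕ (AState M) :=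
  ⟨M.delta, some (Sum.inl M.q0), {some (Sum.inl M.qhalt)}⟩

/-- The fixed database `D_grid = {Succ(a,b), Zero(a)}` (constants `a = 0`, `b = 1`). -/
def Dgrid : Database := [(pSucc, [0, 1]), (pZero, [0])]

/-- The fixed grid-building ruleset `R_grid`. -/
def Rgrid : Ruleset :=
  [ ([(pSucc, [0, 1])], (pSucc, [1, 2])),
    ([(pSucc, [0, 1]), (pSucc, [2, 3])], (pGridPoint, [0, 2, 4])),
    ([(pGridPoint, [0, 1, 2])], (pXCoord, [2, 0])),
    ([(pGridPoint, [0, 1, 2])], (pYCoord, [2, 1])),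
    ([(pXCoord, [3, 0]), (pYCoord, [3, 2]), (pXCoord, [4, 1]), (pYCoord, [4, 2]),
       (pSucc, [0, 1])], (pIncX, [3, 4])),
    ([(pXCoord, [3, 0]), (pYCoord, [3, 2]), (pXCoord, [4, 0]), (pYCoord, [4, 5]),
       (pSucc, [2, 5])], (pIncY, [3, 4])),
    ([(pIncX, [0, 1])], (pDecX, [1, 0])),
    ([(pIncY, [0, 1])], (pDecY, [1, 0])),
    ([(pXCoord, [0, 1]), (pZero, [1])], (pXZero, [0, 0])),
    ([(pYCoord, [0, 1]), (pZero, [1])], (pYZero, [0, 0])) ]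

/-- The grid point with coordinates `(x, y)`. -/
def gpt (x y : ℕ) : GTerm := GTerm.func 0 [GTerm.const x, GTerm.const y]

/-- The infinite grid instance `G`: terms are coordinate pairs, with
`IncX`/`IncY`/`DecX`/`DecY` edges and `XZero`/`YZero` self-loops. -/
def GridInst : Inst :=
  {α | (∃ x y, α = ⟨pIncX, [gpt x y, gpt (x + 1) y]⟩) ∨
       (∃ x y, α = ⟨pIncY, [gpt x y, gpt x (y + 1)]⟩) ∨
       (∃ x y, α = ⟨pDecX, [gpt (x + 1) y, gpt x y]⟩) ∨
       (∃ x y, α = ⟨pDecY, [gpt x (y + 1), gpt x y]⟩) ∨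
       (∃ y, α = ⟨pXZero, [gpt 0 y, gpt 0 y]⟩) ∨
       (∃ x, α = ⟨pYZero, [gpt x 0, gpt x 0]⟩)}

/-- One step of the DFA `A_M` walking over the instance `I`: move along an
edge of `I` whose label matches a transition from the current state. -/
def walkStep (M : TCA) (I : Inst) (c c' : AState M × GTerm) : Prop :=
  ∃ p, (⟨p, [c.2, c'.2]⟩ : GAtom) ∈ I ∧ M.delta c.1 p = c'.1

/-! ### Encoding regular expressions (for computability statements) -/

/-- A concrete injective serialization of regular expressions (over an
encodable alphabet) as lists of naturals. -/
def encodeREg {α : Type} [Encodable α] : RegularExpression α → List ℕ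
  | RegularExpression.zero => [0]
  | RegularExpression.epsilon => [1]
  | RegularExpression.char a => [2, Encodable.encode a]
  | RegularExpression.plus a b => 3 :: (encodeREg a ++ encodeREg b)
  | RegularExpression.comp a b => 4 :: (encodeREg a ++ encodeREg b)
  | RegularExpression.star a => 5 :: encodeREg a

/-! ### Datalog rules, two-way and higher-arity path queries -/

/-- A Datalog rule: no existential variables in the head. -/
def isDatalogRule (ρ : ERule) : Prop := ∀ v ∈ ρ.2.2, v ∈ bodyVarList ρ

/-- The predicates occurring in a database. -/
def dbPreds (D : Database) : Set ℕ := {p | ∃ a ∈ D, a.1 = p}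

/-- The predicates occurring in a ruleset. -/
def rsPreds (R : Ruleset) : Set ℕ := {p | ∃ ρ ∈ R, (∃ a ∈ ρ.1, a.1 = p) ∨ ρ.2.1 = p}

/-- The predicates occurring in rule heads of a ruleset. -/
def headPreds (R : Ruleset) : Set ℕ := {p | ∃ ρ ∈ R, ρ.2.1 = p}

/-- A two-way path: `inl p` traverses a `p`-edge forwards, `inr p` (i.e. `p⁻`)
traverses a `p`-edge backwards. -/
inductive IPath2 (I : Inst) : GTerm → List (ℕ ⊕ ℕ) → GTerm → Prop where
  | nil (t : GTerm) : IPath2 I t [] t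
  | fwd {s t u : GTerm} {p : ℕ} {w : List (ℕ ⊕ ℕ)} :
      (⟨p, [s, t]⟩ : GAtom) ∈ I → IPath2 I t w u → IPath2 I s (Sum.inl p :: w) u
  | bwd {s t u : GTerm} {p : ℕ} {w : List (ℕ ⊕ ℕ)} :
      (⟨p, [t, s]⟩ : GAtom) ∈ I → IPath2 I t w u → IPath2 I s (Sum.inr p :: w) u

/-- Satisfaction of a Boolean 2RPQ given by a regular expression over
`Σ ∪ Σ⁻`. -/
def sat2RPQ (I : Inst) (A : RegularExpression (ℕ ⊕ ℕ)) : Prop :=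
  ∃ s t w, s ∈ adom I ∧ t ∈ adom I ∧ IPath2 I s w t ∧ w ∈ A.matches'

/-- Entailment of a Boolean 2RPQ. -/
def entails2RPQ (D : Database) (R : Ruleset) (A : RegularExpression (ℕ ⊕ ℕ)) : Prop :=
  ∀ I : Inst, isModelOf I D R → sat2RPQ I A

/-- A higher-arity path: an atom `P(t₁, t₂, …, tₙ)` (arity ≥ 2) contributes a
`P`-labelled edge from `t₁` to `t₂`. -/
inductive HPath (I : Inst) : GTerm → List ℕ → GTerm → Prop where
  | nil (t : GTerm) : HPath I t [] t
  | cons {s t u : GTerm} {p : ℕ} {w : List ℕ} (rest : List GTerm) :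
      (⟨p, s :: t :: rest⟩ : GAtom) ∈ I → HPath I t w u → HPath I s (p :: w) u

/-- Satisfaction of a Boolean higher-arity RPQ (HRPQ). -/
def satHRPQ (I : Inst) (A : RegularExpression ℕ) : Prop :=
  ∃ s t w, s ∈ adom I ∧ t ∈ adom I ∧ HPath I s w t ∧ w ∈ A.matches'

/-- Entailment of a Boolean HRPQ. -/
def entailsHRPQ (D : Database) (R : Ruleset) (A : RegularExpression ℕ) : Prop :=
  ∀ I : Inst, isModelOf I D R → satHRPQ I A

/-- A ruleset is finitely RPQ-controllable: every non-entailed Boolean RPQ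
has a finite countermodel. -/
def finitelyRPQControllable (R : Ruleset) : Prop :=
  ∀ (A : RegularExpression ℕ) (D : Database),
    ¬ entailsRPQ D R A → ∃ I : Inst, I.Finite ∧ isModelOf I D R ∧ ¬ satRPQ I A


def hargsOf (ρ : ERule) (h : ℕ → GTerm) : List (GTerm ⊕ ℕ) :=
  ρ.2.2.map (fun v => if v ∈ bodyVarList ρ then Sum.inl (h v) else Sum.inr v)
def ftsOf (ρ : ERule) (h : ℕ → GTerm) : List GTerm :=
  ((hargsOf ρ h).filterMap Sum.getLeft?).dedup
def evsOf (ρ : ERule) (h : ℕ → GTerm) : List ℕ :=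
  ((hargsOf ρ h).filterMap Sum.getRight?).dedup
def patOf (ρ : ERule) (h : ℕ → GTerm) : ℕ × List (ℕ ⊕ ℕ) :=
  (ρ.2.1, (hargsOf ρ h).map (fun x =>
    match x with
    | Sum.inl t => Sum.inl ((ftsOf ρ h).findIdx (fun u => decide (u = t)))
    | Sum.inr v => Sum.inr ((evsOf ρ h).findIdx (fun u => decide (u = v)))))

lemma skolemAtom_pred (ρ : ERule) (h : ℕ → GTerm) : (skolemAtom ρ h).pred = ρ.2.1 := rfl

lemma skolemAtom_args (ρ : ERule) (h : ℕ → GTerm) :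
    (skolemAtom ρ h).args = ρ.2.2.map (fun v =>
      if v ∈ bodyVarList ρ then h v
      else GTerm.func (Encodable.encode (patOf ρ h,
        (evsOf ρ h).findIdx (fun u => decide (u = v)))) (ftsOf ρ h)) := rfl

def recon (pat : ℕ × List (ℕ ⊕ ℕ)) (fts : List GTerm) : GAtom :=
  ⟨pat.1, pat.2.map (fun x => match x with
    | Sum.inl k => fts.getD k (GTerm.const 0)
    | Sum.inr j => GTerm.func (Encodable.encode (pat, j)) fts)⟩

lemma getD_findIdx {l : List GTerm} {x : GTerm} (h : x ∈ l) :
    l.getD (l.findIdx (fun u => decide (u = x))) (GTerm.const 0) = x := by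
  have hlt : l.findIdx (fun u => decide (u = x)) < l.length :=
    List.findIdx_lt_length_of_exists ⟨x, h, by simp⟩
  have h2 := List.findIdx_getElem (p := fun u => decide (u = x)) (w := hlt)
  simp only [decide_eq_true_eq] at h2
  simp [List.getD_eq_getElem?_getD, List.getElem?_eq_getElem hlt, h2]

lemma mem_fts {ρ : ERule} {h : ℕ → GTerm} {v : ℕ} (hv : v ∈ ρ.2.2)
    (hb : v ∈ bodyVarList ρ) : h v ∈ ftsOf ρ h := by
  unfold ftsOf
  rw [List.mem_dedup, List.mem_filterMap]
  exact ⟨Sum.inl (h v), List.mem_map.2 ⟨v, hv, by simp [hargsOf, hb]⟩, rfl⟩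

lemma skolem_recon (ρ : ERule) (h : ℕ → GTerm) :
    skolemAtom ρ h = recon (patOf ρ h) (ftsOf ρ h) := by
  have hargs : (skolemAtom ρ h).args = (recon (patOf ρ h) (ftsOf ρ h)).args := by
    rw [skolemAtom_args]
    show _ = (patOf ρ h).2.map _
    have hsnd : (patOf ρ h).2 = (hargsOf ρ h).map (fun x => match x with
        | Sum.inl t => Sum.inl ((ftsOf ρ h).findIdx (fun u => decide (u = t)))
        | Sum.inr v => Sum.inr ((evsOf ρ h).findIdx (fun u => decide (u = v)))) := rfl
    rw [hsnd, hargsOf, List.map_map, List.map_map]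
    apply List.map_congr_left
    intro v hv
    by_cases hb : v ∈ bodyVarList ρ
    · simp only [Function.comp_apply, if_pos hb]
      exact (getD_findIdx (mem_fts hv hb)).symm
    · simp only [Function.comp_apply, if_neg hb]
  cases hsk : skolemAtom ρ h with
  | mk p a =>
    cases hrc : recon (patOf ρ h) (ftsOf ρ h) with
    | mk p' a' =>
      have hp : p = p' := by
        have : (skolemAtom ρ h).pred = (recon (patOf ρ h) (ftsOf ρ h)).pred := by
          rw [skolemAtom_pred]; rfl
        rw [hsk, hrc] at this; exact this
      have ha : a = a' := by rw [hsk, hrc] at hargs; exact hargs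
      rw [hp, ha]

lemma mem_foldr_append {v : ℕ} : ∀ (l : List PAtom),
    v ∈ l.foldr (fun a r => a.2 ++ r) [] ↔ ∃ a ∈ l, v ∈ a.2
  | [] => by simp
  | a :: l => by simp [List.foldr_cons, mem_foldr_append l]; aesop

lemma mem_bodyVarList {ρ : ERule} {v : ℕ} :
    v ∈ bodyVarList ρ ↔ ∃ a ∈ ρ.1, v ∈ a.2 := mem_foldr_append ρ.1

lemma stage_mono (R : Set ERule) (I : Inst) {n k : ℕ} (h : n ≤ k) :
    chaseStage R I n ⊆ chaseStage R I k := by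
  induction k with
  | zero =>
      have : n = 0 := Nat.le_zero.1 h
      subst this; exact fun _ hx => hx
  | succ k ih =>
      rcases Nat.lt_or_ge n (k+1) with h' | h'
      · intro x hx
        exact Or.inl (ih (Nat.lt_succ_iff.1 h') hx)
      · have : n = k + 1 := le_antisymm h h'
        subst this; exact fun _ hx => hx

theorem sticky_terms_stick_aux_dummy : True := trivial

/-- Let `I` be an instance, `R` a sticky ruleset (with
sticky marking `m`), and `t` a term of `chase(I,R)` with birth atom `α`. If
`t'` occurs at a marked position of `α`, then every atom `β` of `chase(I,R)`
containing `t` also contains `t'` at a marked position. -/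
theorem sticky_terms_stick (I : Inst) (R : Ruleset) (m : ℕ → Set ℕ)
    (hm : stickyMarking m (rsSet R))
    (t t' : GTerm) (α : GAtom)
    (hα : α ∈ chase I (rsSet R)) (htα : t ∈ α.args)
    (hbirth : ∃ i, α ∈ chaseStage (rsSet R) I (i + 1) ∧
      t ∉ adom (chaseStage (rsSet R) I i))
    (i : ℕ) (hi : i ∈ m α.pred) (hit : α.args[i]? = some t') :
    ∀ β ∈ chase I (rsSet R), t ∈ β.args →
      ∃ j ∈ m β.pred, β.args[j]? = some t' := by
  obtain ⟨i0, hα1, ht0⟩ := hbirth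
  -- α is not in stage i0, hence a freshly produced skolem atom
  simp only [chaseStage, chaseStep, Set.mem_union, Set.mem_setOf_eq] at hα1
  rcases hα1 with hmem | ⟨ρ0, hρ0, h0, hbody0, hαeq⟩
  · exact absurd ⟨α, hmem, htα⟩ ht0
  -- analyse the occurrence of t in α
  have htα' : t ∈ (skolemAtom ρ0 h0).args := hαeq ▸ htα
  rw [skolemAtom_args] at htα'
  obtain ⟨v0, hv0, hfv0⟩ := List.mem_map.1 htα'
  have hv0b : v0 ∉ bodyVarList ρ0 := by
    intro hb
    obtain ⟨a, ha, hva⟩ := mem_bodyVarList.1 hb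
    refine ht0 ⟨substAtom h0 a, hbody0 a ha, ?_⟩
    have : h0 v0 = t := by simpa [if_pos hb] using hfv0
    exact List.mem_map.2 ⟨v0, hva, this⟩
  have ht_eq : GTerm.func (Encodable.encode (patOf ρ0 h0,
      (evsOf ρ0 h0).findIdx (fun u => decide (u = v0)))) (ftsOf ρ0 h0) = t := by
    simpa [if_neg hv0b] using hfv0
  -- the key claim, by induction on chase stages
  have key : ∀ n, ∀ β ∈ chaseStage (rsSet R) I n, t ∈ β.args →
      ∃ j ∈ m β.pred, β.args[j]? = some t' := by
    intro n
    induction n with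
    | zero =>
        intro β hβ htβ
        exact absurd ⟨β, stage_mono (rsSet R) I (Nat.zero_le i0) hβ, htβ⟩ ht0
    | succ n ih =>
        intro β hβ htβ
        simp only [chaseStage, chaseStep, Set.mem_union, Set.mem_setOf_eq] at hβ
        rcases hβ with hβ | ⟨ρ, hρ, h, hbody, rfl⟩
        · exact ih β hβ htβ
        · rw [skolemAtom_args] at htβ
          obtain ⟨v, hv, hfv⟩ := List.mem_map.1 htβ
          by_cases hb : v ∈ bodyVarList ρ
          · -- t comes from the body: sticky propagation
            obtain ⟨a, ha, hva⟩ := mem_bodyVarList.1 hb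
            have hγ : substAtom h a ∈ chaseStage (rsSet R) I n := hbody a ha
            have htγ : t ∈ (substAtom h a).args := by
              have : h v = t := by simpa [if_pos hb] using hfv
              exact List.mem_map.2 ⟨v, hva, this⟩
            obtain ⟨k, hk, hkt⟩ := ih _ hγ htγ
            have hkt' : (a.2.map h)[k]? = some t' := hkt
            rw [List.getElem?_map] at hkt'
            obtain ⟨w, hw, hwt⟩ : ∃ w, a.2[k]? = some w ∧ h w = t' := by
              cases hq : a.2[k]? with
              | none => rw [hq] at hkt'; simp at hkt'
              | some w => rw [hq] at hkt'; exact ⟨w, rfl, by simpa using hkt'⟩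
            obtain ⟨j, hj, hjw⟩ := (hm ρ hρ).2 w a ha ⟨k, hk, hw⟩
            refine ⟨j, hj, ?_⟩
            rw [skolemAtom_args, List.getElem?_map, hjw]
            have hwmem : w ∈ a.2 := by
              obtain ⟨hk', he⟩ := List.getElem?_eq_some_iff.1 hw
              exact he ▸ List.getElem_mem hk'
            have hwb : w ∈ bodyVarList ρ := mem_bodyVarList.2 ⟨a, ha, hwmem⟩
            simp [if_pos hwb, hwt]
          · -- t is the fresh skolem term: β must equal α
            have hfv' : GTerm.func (Encodable.encode (patOf ρ h,
                (evsOf ρ h).findIdx (fun u => decide (u = v)))) (ftsOf ρ h) = t := by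
              simpa [if_neg hb] using hfv
            have hfuncs := hfv'.trans ht_eq.symm
            injection hfuncs with hc hf
            have hpj := Encodable.encode_injective hc
            have hpat : patOf ρ h = patOf ρ0 h0 := congrArg Prod.fst hpj
            have hβα : skolemAtom ρ h = α := by
              rw [skolem_recon, hpat, hf, ← skolem_recon, ← hαeq]
            rw [hβα]
            exact ⟨i, hi, hit⟩
  intro β hβ htβ
  obtain ⟨n, hn⟩ := Set.mem_iUnion.1 hβ
  exact key n β hn htβ
end
end

section
/- For every sticky ruleset R, the ruleset rew(R) is sticky. -/
set_option maxHeartbeats 1000000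

noncomputable section

open Classical

/-! ### Auxiliary lemmas for Statement 14 -/

namespace StickyAux

/-- All variable occurrences of a CQ. -/
def allVars (Q : List PAtom) : List ℕ := Q.foldr (fun a r => a.2 ++ r) []

lemma bodyVarList_eq (ρ : ERule) : bodyVarList ρ = allVars ρ.1 := rfl

lemma allVars_cons (a : PAtom) (Q : List PAtom) : allVars (a :: Q) = a.2 ++ allVars Q := rfl

lemma allVars_append (Q₁ Q₂ : List PAtom) :
    allVars (Q₁ ++ Q₂) = allVars Q₁ ++ allVars Q₂ := by
  induction Q₁ with
  | nil => rfl
  | cons a t ih =>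
      show a.2 ++ allVars (t ++ Q₂) = (a.2 ++ allVars t) ++ allVars Q₂
      rw [ih, List.append_assoc]

lemma allVars_map (h : ℕ → ℕ) (Q : List PAtom) :
    allVars (Q.map (substP h)) = (allVars Q).map h := by
  induction Q with
  | nil => rfl
  | cons a t ih =>
      show (a.2.map h) ++ allVars (t.map (substP h)) = (a.2 ++ allVars t).map h
      rw [ih, List.map_append]

lemma mem_allVars {v : ℕ} {Q : List PAtom} : v ∈ allVars Q ↔ ∃ a ∈ Q, v ∈ a.2 := by
  induction Q with
  | nil => simp [allVars]
  | cons a t ih =>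
      rw [allVars_cons, List.mem_append, ih]
      simp only [List.mem_cons]
      constructor
      · rintro (h | ⟨b, hb, hv⟩)
        · exact ⟨a, Or.inl rfl, h⟩
        · exact ⟨b, Or.inr hb, hv⟩
      · rintro ⟨b, (rfl | hb), hv⟩
        · exact Or.inl hv
        · exact Or.inr ⟨b, hb, hv⟩

lemma mem_cqVars {v : ℕ} {Q : List PAtom} : v ∈ cqVars Q ↔ v ∈ allVars Q := mem_allVars.symm

lemma mem_of_getElem? {l : List ℕ} {n : ℕ} {a : ℕ} (h : l[n]? = some a) : a ∈ l := by
  obtain ⟨h2, rfl⟩ := List.getElem?_eq_some_iff.mp h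
  exact List.getElem_mem h2

lemma allVars_sublist {Q₁ Q₂ : List PAtom} (h : List.Sublist Q₁ Q₂) :
    List.Sublist (allVars Q₁) (allVars Q₂) := by
  induction h with
  | slnil => exact List.Sublist.refl _
  | cons a _ ih => exact ih.trans (List.sublist_append_right a.2 _)
  | cons_cons a _ ih => exact ih.append_left a.2

lemma count_le_of_mem_atom {u : ℕ} {a : PAtom} {Q : List PAtom} (h : a ∈ Q) :
    a.2.count u ≤ (allVars Q).count u := by
  induction Q with
  | nil => cases h
  | cons b t ih =>
      rw [allVars_cons, List.count_append]
      rcases List.mem_cons.mp h with rfl | hb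
      · omega
      · have := ih hb; omega

lemma two_le_count {u : ℕ} {a₀ a₁ : PAtom} {Q : List PAtom} (h₀ : a₀ ∈ Q) (h₁ : a₁ ∈ Q)
    (hne : a₀ ≠ a₁) (hu₀ : u ∈ a₀.2) (hu₁ : u ∈ a₁.2) : 2 ≤ (allVars Q).count u := by
  induction Q with
  | nil => cases h₀
  | cons b t ih =>
      rw [allVars_cons, List.count_append]
      rcases List.mem_cons.mp h₀ with rfl | hb₀
      · have h₁t : a₁ ∈ t := by
          rcases List.mem_cons.mp h₁ with rfl | h
          · exact absurd rfl hne
          · exact h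
        have c1 : 1 ≤ a₀.2.count u := List.count_pos_iff.mpr hu₀
        have c2 : 1 ≤ a₁.2.count u := List.count_pos_iff.mpr hu₁
        have := (count_le_of_mem_atom (u := u) h₁t); omega
      · rcases List.mem_cons.mp h₁ with rfl | hb₁
        · have c1 : 1 ≤ a₁.2.count u := List.count_pos_iff.mpr hu₁
          have c2 : 1 ≤ a₀.2.count u := List.count_pos_iff.mpr hu₀
          have := (count_le_of_mem_atom (u := u) hb₀); omega
        · have := ih hb₀ hb₁; omega

lemma count_map_le' {g : ℕ → ℕ} {v x : ℕ} {l : List ℕ} (h : ∀ u ∈ l, g u = v → u = x) :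
    (l.map g).count v ≤ l.count x := by
  induction l with
  | nil => simp
  | cons u t ih =>
      have ih' := ih (fun w hw hgw => h w (List.mem_cons_of_mem _ hw) hgw)
      rw [List.map_cons, List.count_cons, List.count_cons]
      by_cases hgu : g u = v
      · have hx : u = x := h u List.mem_cons_self hgu
        subst hx
        simp only [beq_iff_eq, hgu, if_true]
        omega
      · simp only [beq_iff_eq, hgu, if_false]
        omega

lemma exists_two_preimages {g : ℕ → ℕ} {v : ℕ} {l : List ℕ} (h : 2 ≤ (l.map g).count v) :
    (∃ u ∈ l, g u = v ∧ 2 ≤ l.count u) ∨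
      (∃ u₁ ∈ l, ∃ u₂ ∈ l, u₁ ≠ u₂ ∧ g u₁ = v ∧ g u₂ = v) := by
  by_cases hd : ∃ u₁ ∈ l, ∃ u₂ ∈ l, u₁ ≠ u₂ ∧ g u₁ = v ∧ g u₂ = v
  · exact Or.inr hd
  · push_neg at hd
    left
    set P := l.filter (fun u => g u == v) with hP
    have hlen : (l.map g).count v = P.length := by
      rw [List.count, List.countP_map, List.countP_eq_length_filter]
      rfl
    have hPlen : 2 ≤ P.length := by omega
    have hPne : P ≠ [] := by
      intro he; rw [he] at hPlen; simp at hPlen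
    obtain ⟨u, hu⟩ := List.exists_mem_of_ne_nil P hPne
    have huP := List.mem_filter.mp hu
    have hgu : g u = v := by simpa using huP.2
    refine ⟨u, huP.1, hgu, ?_⟩
    have hall : ∀ b ∈ P, u = b := by
      intro b hb
      have hbP := List.mem_filter.mp hb
      have hgb : g b = v := by simpa using hbP.2
      by_contra hne
      exact (hd u huP.1 b hbP.1 hne hgu) hgb
    have : P.count u = P.length := List.count_eq_length.mpr hall
    have hsub : P.count u ≤ l.count u := (List.filter_sublist (l := l)).count_le u
    omega

lemma le_foldr_max {n : ℕ} {l : List ℕ} (h : n ∈ l) : n ≤ l.foldr max 0 := by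
  induction l with
  | nil => cases h
  | cons a t ih =>
      rcases List.mem_cons.mp h with rfl | ht
      · exact le_max_left _ _
      · exact (ih ht).trans (le_max_right _ _)

/-- Variable `v` is at a marked position of some atom of `Q`. -/
def markedIn (m : ℕ → Set ℕ) (Q : List PAtom) (v : ℕ) : Prop :=
  ∃ a ∈ Q, ∃ i ∈ m a.1, a.2[i]? = some v

/-- Key use of minimality of the variable identification `σ`: a variable `u₁`
occurring at most once in `Q`, outside every preimage of the unified head atom,
cannot be `σ`-identified with a different variable `u₂` of `Q`. -/
lemma min_contra (τ : ERule) (Y : Set ℕ) (YL : List ℕ) (hYL : ∀ y ∈ Y, y ∈ YL)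
    (Q : List PAtom) (σ f : ℕ → ℕ)
    (hApp : backApp τ Y Q σ f)
    (hmin : ∀ σ' : ℕ → ℕ, (∀ v w, σ' v = σ' w → σ v = σ w) →
      (∃ v w, v ∈ cqVars Q ∧ w ∈ cqVars Q ∧ σ v = σ w ∧ σ' v ≠ σ' w) →
      ¬ backApp τ Y Q σ' f)
    {u₁ u₂ : ℕ} {a₀ a₂ : PAtom}
    (ha₀Q : a₀ ∈ Q) (hu₁a₀ : u₁ ∈ a₀.2) (ha₀ne : substP σ a₀ ≠ substP f τ.2)
    (hcnt : (allVars Q).count u₁ ≤ 1)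
    (ha₂Q : a₂ ∈ Q) (hu₂a₂ : u₂ ∈ a₂.2)
    (hne : u₁ ≠ u₂) (hσeq : σ u₁ = σ u₂) : False := by
  obtain ⟨h1, h2, h3, h4, h5, h6⟩ := hApp
  set Ls : List ℕ := (allVars Q).map σ ++ YL with hLsdef
  set N : ℕ := Ls.foldr max 0 + 1 with hNdef
  set σ' : ℕ → ℕ := fun w => if w = u₁ then N else if σ w ∈ Ls then σ w else N + 1 + σ w
    with hσ'def
  have hLsN : ∀ n ∈ Ls, n < N := fun n hn => Nat.lt_succ_of_le (le_foldr_max hn)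
  have hσLs : ∀ u, u ∈ allVars Q → σ u ∈ Ls := fun u hu =>
    List.mem_append_left _ (List.mem_map_of_mem (f := σ) hu)
  have hu₁Y : u₁ ∉ Y := by
    intro hY
    have e1 : σ u₁ = u₁ := h1 u₁ hY
    have : u₂ = u₁ := h2 u₂ u₁ hY (hσeq.symm.trans e1)
    exact hne this.symm
  have hσ'u₁ : σ' u₁ = N := by rw [hσ'def]; simp
  have hval : ∀ w, w ≠ u₁ → (σ w ∈ Ls ∧ σ' w = σ w) ∨ (σ w ∉ Ls ∧ σ' w = N + 1 + σ w) := by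
    intro w hw
    by_cases hc : σ w ∈ Ls
    · exact Or.inl ⟨hc, by rw [hσ'def]; simp [hw, hc]⟩
    · exact Or.inr ⟨hc, by rw [hσ'def]; simp [hw, hc]⟩
  have hσ'Q : ∀ u, u ∈ allVars Q → u ≠ u₁ → σ' u = σ u := by
    intro u hu hne'
    rcases hval u hne' with ⟨_, e⟩ | ⟨hc, _⟩
    · exact e
    · exact absurd (hσLs u hu) hc
  have hrefl : ∀ w₁ w₂, σ' w₁ = σ' w₂ → σ w₁ = σ w₂ := by
    intro w₁ w₂ he
    by_cases e1 : w₁ = u₁ <;> by_cases e2 : w₂ = u₁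
    · rw [e1, e2]
    · rcases hval w₂ e2 with ⟨hc, ev⟩ | ⟨hc, ev⟩
      · have := hLsN _ hc; rw [e1, hσ'u₁, ev] at he; omega
      · rw [e1, hσ'u₁, ev] at he; omega
    · rcases hval w₁ e1 with ⟨hc, ev⟩ | ⟨hc, ev⟩
      · have := hLsN _ hc; rw [e2, hσ'u₁, ev] at he; omega
      · rw [e2, hσ'u₁, ev] at he; omega
    · rcases hval w₁ e1 with ⟨hc1, ev1⟩ | ⟨hc1, ev1⟩ <;>
        rcases hval w₂ e2 with ⟨hc2, ev2⟩ | ⟨hc2, ev2⟩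
      · rw [ev1, ev2] at he; exact he
      · have := hLsN _ hc1; rw [ev1, ev2] at he; omega
      · have := hLsN _ hc2; rw [ev1, ev2] at he; omega
      · rw [ev1, ev2] at he; omega
  have hHatu₁ : ∀ a ∈ Q, substP σ a = substP f τ.2 → u₁ ∉ a.2 := by
    intro a haQ hae hu
    have hne' : a₀ ≠ a := fun e => ha₀ne (e ▸ hae)
    have := two_le_count ha₀Q haQ hne' hu₁a₀ hu
    omega
  have hmapσ' : ∀ a ∈ Q, u₁ ∉ a.2 → substP σ' a = substP σ a := by
    intro a haQ hu
    have hmaps : a.2.map σ' = a.2.map σ :=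
      List.map_congr_left (fun u hu' =>
        hσ'Q u (mem_allVars.mpr ⟨a, haQ, hu'⟩) (fun e => hu (e ▸ hu')))
    show (a.1, a.2.map σ') = (a.1, a.2.map σ)
    rw [hmaps]
  obtain ⟨a₁, ha₁Q, ha₁⟩ := List.mem_map.mp h3
  have hApp' : backApp τ Y Q σ' f := by
    refine ⟨?_, ?_, ?_, h4, h5, ?_⟩
    · intro y hy
      have hyne : y ≠ u₁ := fun e => hu₁Y (e ▸ hy)
      have hσy : σ y = y := h1 y hy
      have hyLs : σ y ∈ Ls := by rw [hσy]; exact List.mem_append_right _ (hYL y hy)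
      rcases hval y hyne with ⟨_, e⟩ | ⟨hc, _⟩
      · rw [e, hσy]
      · exact absurd hyLs hc
    · intro w y hy he
      by_cases hw : w = u₁
      · exfalso
        have hyl : y ∈ Ls := List.mem_append_right _ (hYL y hy)
        have := hLsN _ hyl
        rw [hw, hσ'u₁] at he; omega
      · rcases hval w hw with ⟨hc, ev⟩ | ⟨hc, ev⟩
        · exact h2 w y hy (by rw [← ev, he])
        · exfalso
          have hyl : y ∈ Ls := List.mem_append_right _ (hYL y hy)
          have := hLsN _ hyl
          rw [ev] at he; omega
    · refine List.mem_map.mpr ⟨a₁, ha₁Q, ?_⟩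
      rw [hmapσ' a₁ ha₁Q (hHatu₁ a₁ ha₁Q ha₁), ha₁]
    · rintro a' ha' ⟨z, hz, hfz⟩
      obtain ⟨a, haQ, rfl⟩ := List.mem_map.mp ha'
      have hzHead : z ∈ τ.2.2 := hz.1
      have hfzHat : f z ∈ (substP f τ.2).2 := List.mem_map_of_mem (f := f) hzHead
      have hfzLs : f z ∈ Ls := by
        rw [← ha₁] at hfzHat
        obtain ⟨u', hu', he'⟩ := List.mem_map.mp hfzHat
        rw [← he']
        exact hσLs u' (mem_allVars.mpr ⟨a₁, ha₁Q, hu'⟩)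
      have hfzN : f z < N := hLsN _ hfzLs
      obtain ⟨u, hu, hσ'u⟩ := List.mem_map.mp hfz
      have hune : u ≠ u₁ := by
        intro e; rw [e, hσ'u₁] at hσ'u; omega
      have hσu : σ u = f z := by
        rcases hval u hune with ⟨_, ev⟩ | ⟨_, ev⟩
        · rw [← ev]; exact hσ'u
        · rw [ev] at hσ'u; omega
      have haHat : substP σ a = substP f τ.2 := by
        refine h6 (substP σ a) (List.mem_map_of_mem haQ) ⟨z, hz, ?_⟩
        exact hσu ▸ List.mem_map_of_mem (f := σ) hu
      rw [hmapσ' a haQ (hHatu₁ a haQ haHat)]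
      exact haHat
  have hu₂Q : u₂ ∈ allVars Q := mem_allVars.mpr ⟨a₂, ha₂Q, hu₂a₂⟩
  have hσ'u₂ : σ' u₂ = σ u₂ := hσ'Q u₂ hu₂Q (Ne.symm hne)
  have hlt : σ u₂ < N := hLsN _ (hσLs u₂ hu₂Q)
  exact hmin σ' hrefl
    ⟨u₁, u₂, mem_cqVars.mpr (mem_allVars.mpr ⟨a₀, ha₀Q, hu₁a₀⟩),
      mem_cqVars.mpr hu₂Q, hσeq, by rw [hσ'u₁, hσ'u₂]; omega⟩ hApp'

/-- The sticky invariant is preserved by a single backward rewriting step. -/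
lemma step_preserves (m : ℕ → Set ℕ) (R : Set ERule) (hm : stickyMarking m R)
    (Y : Set ℕ) (YL : List ℕ) (hYL : ∀ y ∈ Y, y ∈ YL) (MH : ℕ → Prop)
    {Q Q' : List PAtom} (hstep : backStep R Y Q Q')
    (hInv : ∀ v, (1 < (allVars Q).count v ∨ markedIn m Q v) → v ∈ Y ∧ MH v) :
    ∀ v, (1 < (allVars Q').count v ∨ markedIn m Q' v) → v ∈ Y ∧ MH v := by
  obtain ⟨τ, hτR, σ, f, g, hApp, hmin, hgf, hginj, hfresh, hQ'⟩ := hstep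
  obtain ⟨hS1, hS2⟩ := hm τ hτR
  have h3 := hApp.2.2.1
  obtain ⟨a₁, ha₁Q, ha₁⟩ := List.mem_map.mp h3
  have hpair := Prod.ext_iff.mp ha₁
  have hfirst : a₁.1 = τ.2.1 := hpair.1
  have hsecond : a₁.2.map σ = τ.2.2.map f := hpair.2
  have keyA : ∀ x, markedInHead m τ x → f x ∈ Y ∧ MH (f x) := by
    intro x hx
    obtain ⟨j, hjm, hjx⟩ := hx
    have hgj : (a₁.2.map σ)[j]? = some (f x) := by
      rw [hsecond, List.getElem?_map, hjx]; rfl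
    rw [List.getElem?_map] at hgj
    obtain ⟨u, hu, hσu⟩ := Option.map_eq_some_iff.mp hgj
    have hmk : markedIn m Q u := ⟨a₁, ha₁Q, j, by rw [hfirst]; exact hjm, hu⟩
    obtain ⟨huY, hMH⟩ := hInv u (Or.inr hmk)
    have hfix : σ u = u := hApp.1 u huY
    rw [← hσu, hfix]
    exact ⟨huY, hMH⟩
  have hfcq : ∀ u, u ∈ headVars τ → f u ∈ cqVars (Q.map (substP σ)) := fun u hu =>
    mem_cqVars.mpr (mem_allVars.mpr ⟨substP f τ.2, h3, List.mem_map_of_mem (f := f) hu⟩)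
  intro v hv
  rw [hQ'] at hv
  rcases hv with hjoin | hmark
  · -- join case
    rw [allVars_append, List.count_append] at hjoin
    have hFeq : allVars ((Q.map (substP σ)).filter (fun a => decide (a ≠ substP f τ.2)))
        = (allVars (Q.filter ((fun a => decide (a ≠ substP f τ.2)) ∘ substP σ))).map σ := by
      rw [List.filter_map, allVars_map]
    rw [hFeq, allVars_map] at hjoin
    set Qs : List PAtom := Q.filter ((fun a => decide (a ≠ substP f τ.2)) ∘ substP σ)
      with hQsdef
    have hQsmem : ∀ a ∈ Qs, a ∈ Q ∧ substP σ a ≠ substP f τ.2 := by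
      intro a ha
      have h := List.mem_filter.mp ha
      exact ⟨h.1, by simpa using h.2⟩
    by_cases hB0 : v ∈ (allVars τ.1).map g
    · -- v comes from the new body atoms
      obtain ⟨x, hxτ, hgx⟩ := List.mem_map.mp hB0
      have hxbody : x ∈ bodyVarList τ := by rw [bodyVarList_eq]; exact hxτ
      by_cases hxh : x ∈ headVars τ
      · -- x is a frontier variable of τ
        have hgfx : g x = f x := hgf x ⟨hxbody, hxh⟩
        by_cases hjx : isJoinVar τ x
        · have hmh := hS1 x hjx
          rw [← hgx, hgfx]
          exact keyA x hmh
        · -- x occurs once in the body of τ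
          have hpre : ∀ u ∈ allVars τ.1, g u = v → u = x := by
            intro u hu hgu
            by_cases huh : u ∈ headVars τ
            · have hfu : f u = f x := by
                rw [← hgf u ⟨by rw [bodyVarList_eq]; exact hu, huh⟩, hgu, ← hgx, hgfx]
              exact hApp.2.2.2.1 u x huh hxh hfu
            · exfalso
              have hfr := hfresh u (by rw [bodyVarList_eq]; exact hu) huh
              apply hfr.1
              rw [hgu, ← hgx, hgfx]
              exact hfcq x hxh
          have hcnt1 : (allVars τ.1).count x ≤ 1 := by
            have : ¬ (1 < (bodyVarList τ).count x) := hjx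
            rw [bodyVarList_eq] at this
            omega
          have hcB1 : ((allVars τ.1).map g).count v ≤ 1 :=
            le_trans (count_map_le' hpre) hcnt1
          have hvF : v ∈ (allVars Qs).map σ := by
            apply List.count_pos_iff.mp
            omega
          obtain ⟨u₁, hu₁Qs, hσ1⟩ := List.mem_map.mp hvF
          obtain ⟨a₀, ha₀Qs, hu₁a₀⟩ := mem_allVars.mp hu₁Qs
          obtain ⟨ha₀Q, ha₀ne⟩ := hQsmem a₀ ha₀Qs
          have hfxa₁ : f x ∈ a₁.2.map σ := by
            rw [hsecond]
            exact List.mem_map_of_mem (f := f) hxh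
          obtain ⟨u₂, hu₂a₁, hσ2⟩ := List.mem_map.mp hfxa₁
          have hσ2v : σ u₂ = v := by rw [hσ2, ← hgfx, hgx]
          by_cases he : u₁ = u₂
          · subst he
            have hane : a₀ ≠ a₁ := fun e => ha₀ne (e ▸ ha₁)
            have h2c := two_le_count ha₀Q ha₁Q hane hu₁a₀ hu₂a₁
            obtain ⟨huY, hMH⟩ := hInv u₁ (Or.inl (by omega))
            have hfix := hApp.1 u₁ huY
            rw [← hσ1, hfix]
            exact ⟨huY, hMH⟩
          · by_cases hc1 : 1 < (allVars Q).count u₁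
            · obtain ⟨huY, hMH⟩ := hInv u₁ (Or.inl hc1)
              have hfix := hApp.1 u₁ huY
              rw [← hσ1, hfix]
              exact ⟨huY, hMH⟩
            · exact (min_contra τ Y YL hYL Q σ f hApp hmin ha₀Q hu₁a₀ ha₀ne (by omega)
                ha₁Q hu₂a₁ he (hσ1.trans hσ2v.symm)).elim
      · -- x is a fresh (non-frontier) variable: impossible
        exfalso
        have hfr := hfresh x hxbody hxh
        have hvnF : v ∉ (allVars Qs).map σ := by
          intro hvF
          obtain ⟨u', hu', he'⟩ := List.mem_map.mp hvF
          have hu'Q : u' ∈ allVars Q := (allVars_sublist (List.filter_sublist (l := Q))).subset hu'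
          have : v ∈ cqVars (Q.map (substP σ)) := by
            apply mem_cqVars.mpr
            rw [allVars_map]
            exact List.mem_map.mpr ⟨u', hu'Q, he'⟩
          rw [← hgx] at this
          exact hfr.1 this
        have hcF0 : ((allVars Qs).map σ).count v = 0 := List.count_eq_zero.mpr hvnF
        have hcB2 : 2 ≤ ((allVars τ.1).map g).count v := by omega
        have hpre : ∀ u ∈ allVars τ.1, g u = v → u = x := by
          intro u hu hgu
          by_cases huh : u ∈ headVars τ
          · exfalso
            have hgfu : g u = f u := hgf u ⟨by rw [bodyVarList_eq]; exact hu, huh⟩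
            apply hfr.1
            rw [hgx, ← hgu, hgfu]
            exact hfcq u huh
          · exact hginj u x (by rw [bodyVarList_eq]; exact hu) huh hxbody hxh
              (hgu.trans hgx.symm)
        have hle := count_map_le' (x := x) hpre
        have hjx : isJoinVar τ x := by
          show 1 < (bodyVarList τ).count x
          rw [bodyVarList_eq]
          omega
        obtain ⟨j, _, hj'⟩ := hS1 x hjx
        exact hxh (mem_of_getElem? hj')
    · -- v does not come from the new body atoms
      have hcB : ((allVars τ.1).map g).count v = 0 := List.count_eq_zero.mpr hB0
      have hcF : 2 ≤ ((allVars Qs).map σ).count v := by omega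
      rcases exists_two_preimages hcF with ⟨u, huQs, hσu, hc2⟩ |
        ⟨u₁, hu₁, u₂, hu₂, hne, hσ1, hσ2⟩
      · have hsub : (allVars Qs).count u ≤ (allVars Q).count u :=
          (allVars_sublist (List.filter_sublist (l := Q))).count_le u
        obtain ⟨huY, hMH⟩ := hInv u (Or.inl (by omega))
        have hfix := hApp.1 u huY
        rw [← hσu, hfix]
        exact ⟨huY, hMH⟩
      · obtain ⟨a₀, ha₀Qs, hu₁a₀⟩ := mem_allVars.mp hu₁
        obtain ⟨a₂, ha₂Qs, hu₂a₂⟩ := mem_allVars.mp hu₂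
        obtain ⟨ha₀Q, ha₀ne⟩ := hQsmem a₀ ha₀Qs
        obtain ⟨ha₂Q, _⟩ := hQsmem a₂ ha₂Qs
        by_cases hc1 : 1 < (allVars Q).count u₁
        · obtain ⟨huY, hMH⟩ := hInv u₁ (Or.inl hc1)
          have hfix := hApp.1 u₁ huY
          rw [← hσ1, hfix]
          exact ⟨huY, hMH⟩
        · exact (min_contra τ Y YL hYL Q σ f hApp hmin ha₀Q hu₁a₀ ha₀ne (by omega)
            ha₂Q hu₂a₂ hne (hσ1.trans hσ2.symm)).elim
  · -- marked case
    obtain ⟨a, haQ', i, him, hia⟩ := hmark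
    rcases List.mem_append.mp haQ' with hF | hB
    · have hmf := List.mem_filter.mp hF
      obtain ⟨a₀, ha₀Q, rfl⟩ := List.mem_map.mp hmf.1
      have him' : i ∈ m a₀.1 := him
      have hia' : (a₀.2.map σ)[i]? = some v := hia
      rw [List.getElem?_map] at hia'
      obtain ⟨u, hu, hσu⟩ := Option.map_eq_some_iff.mp hia'
      obtain ⟨huY, hMH⟩ := hInv u (Or.inr ⟨a₀, ha₀Q, i, him', hu⟩)
      have hfix := hApp.1 u huY
      rw [← hσu, hfix]
      exact ⟨huY, hMH⟩
    · obtain ⟨b, hbτ, rfl⟩ := List.mem_map.mp hB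
      have him' : i ∈ m b.1 := him
      have hia' : (b.2.map g)[i]? = some v := hia
      rw [List.getElem?_map] at hia'
      obtain ⟨x, hx, hgx⟩ := Option.map_eq_some_iff.mp hia'
      have hxb : x ∈ b.2 := mem_of_getElem? hx
      have hxbody : x ∈ bodyVarList τ := by
        rw [bodyVarList_eq]; exact mem_allVars.mpr ⟨b, hbτ, hxb⟩
      have hmh : markedInHead m τ x := hS2 x b hbτ ⟨i, him', hx⟩
      have hxhead : x ∈ headVars τ := by
        obtain ⟨j, _, hj'⟩ := hmh; exact mem_of_getElem? hj'
      have hgfx : g x = f x := hgf x ⟨hxbody, hxhead⟩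
      rw [← hgx, hgfx]
      exact keyA x hmh

end StickyAux


/-- For every sticky ruleset `R`, the ruleset `rew(R)`
(obtained by backward-rewriting the rule bodies) is sticky. -/
theorem rewriting_preserves_sticky (R : Ruleset) (h : isSticky R) :
    isStickySet (rewSet (rsSet R)) := by
  obtain ⟨m, hm⟩ := h
  refine ⟨m, ?_⟩
  intro ρ' hρ'
  rcases hρ' with hin | ⟨ρ, hρ, q, hrtg, rfl⟩
  · exact hm ρ' hin
  · have hbase : ∀ v, (1 < (StickyAux.allVars ρ.1).count v ∨ StickyAux.markedIn m ρ.1 v) →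
        v ∈ frontierVars ρ ∧ markedInHead m ρ v := by
      intro v hv
      obtain ⟨hS1, hS2⟩ := hm ρ hρ
      rcases hv with hj | ⟨a, ha, i, him, hia⟩
      · have hmh := hS1 v hj
        refine ⟨⟨?_, ?_⟩, hmh⟩
        · show v ∈ bodyVarList ρ
          rw [StickyAux.bodyVarList_eq]
          exact List.count_pos_iff.mp (by omega)
        · obtain ⟨j, _, hj'⟩ := hmh; exact StickyAux.mem_of_getElem? hj'
      · have hmh := hS2 v a ha ⟨i, him, hia⟩
        refine ⟨⟨?_, ?_⟩, hmh⟩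
        · show v ∈ bodyVarList ρ
          rw [StickyAux.bodyVarList_eq]
          exact StickyAux.mem_allVars.mpr ⟨a, ha, StickyAux.mem_of_getElem? hia⟩
        · obtain ⟨j, _, hj'⟩ := hmh; exact StickyAux.mem_of_getElem? hj'
    have hInvq : ∀ v, (1 < (StickyAux.allVars q).count v ∨ StickyAux.markedIn m q v) →
        v ∈ frontierVars ρ ∧ markedInHead m ρ v := by
      induction hrtg with
      | refl => exact hbase
      | tail hab hbc ih =>
          exact StickyAux.step_preserves m (rsSet R) hm (frontierVars ρ) (bodyVarList ρ)
            (fun y hy => hy.1) (markedInHead m ρ) hbc ih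
    constructor
    · intro v hj
      exact (hInvq v (Or.inl hj)).2
    · intro v a ha hmk
      exact (hInvq v (Or.inr ⟨a, ha, hmk⟩)).2
end
end
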